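/- Let f₁, f₂ : ℝ^m × ℝ^n → ℝ be twice continuously differentiable and define the game vector field ω(x,y) = (∇ₓ f₁(x,y), ∇_y f₂(x,y)) : ℝ^{m+n} → ℝ^{m+n}. If (x*, y*) is a differential Nash equilibrium and the Jacobian dω(x*, y*) is invertible, then (x*, y*) is an isolated zero of ω: there is a neighborhood W of (x*, y*) in which (x*, y*) is the only zero of ω; in particular, it is the only local Nash equilibrium in W. -/

import Mathlib

theorem stmt_6
    (m n : ℕ)
    (f₁ f₂ : EuclideanSpace ℝ (Fin m) → EuclideanSpace ℝ (Fin n) → ℝ)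
    (hf₁ : ContDiff ℝ 2 (fun p : EuclideanSpace ℝ (Fin m) × EuclideanSpace ℝ (Fin n) => f₁ p.1 p.2))
    (hf₂ : ContDiff ℝ 2 (fun p : EuclideanSpace ℝ (Fin m) × EuclideanSpace ℝ (Fin n) => f₂ p.1 p.2))
    (ω : EuclideanSpace ℝ (Fin m) × EuclideanSpace ℝ (Fin n) →
         EuclideanSpace ℝ (Fin m) × EuclideanSpace ℝ (Fin n))
    (hω : ∀ p, ω p = (gradient (fun x => f₁ x p.2) p.1, gradient (fun y => f₂ p.1 y) p.2))
    (x : EuclideanSpace ℝ (Fin m)) (y : EuclideanSpace ℝ (Fin n))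
    (hzero : ω (x, y) = 0)
    (hH₁ : ∀ v : EuclideanSpace ℝ (Fin m), v ≠ 0 →
      0 < (inner ℝ (fderiv ℝ (fun x' => gradient (fun x'' => f₁ x'' y) x') x v) v : ℝ))
    (hH₂ : ∀ w : EuclideanSpace ℝ (Fin n), w ≠ 0 →
      0 < (inner ℝ (fderiv ℝ (fun y' => gradient (fun y'' => f₂ x y'') y') y w) w : ℝ))
    (hinv : Function.Bijective (fderiv ℝ ω (x, y))) :
    ∃ W ∈ nhds ((x, y) : EuclideanSpace ℝ (Fin m) × EuclideanSpace ℝ (Fin n)),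
      ∀ q ∈ W, ω q = 0 → q = (x, y) := by
  let E := EuclideanSpace ℝ (Fin m)
  let F := EuclideanSpace ℝ (Fin n)
  let F₁ : E × F → ℝ := fun p => f₁ p.1 p.2
  let F₂ : E × F → ℝ := fun p => f₂ p.1 p.2
  have key : ω = fun p : E × F =>
      (((InnerProductSpace.toDual ℝ E).symm ((fderiv ℝ F₁ p).comp (ContinuousLinearMap.inl ℝ E F))),
       ((InnerProductSpace.toDual ℝ F).symm ((fderiv ℝ F₂ p).comp (ContinuousLinearMap.inr ℝ E F)))) := by
    funext p
    rw [hω p]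
    have h1 : fderiv ℝ (fun x' => f₁ x' p.2) p.1 =
        (fderiv ℝ F₁ p).comp (ContinuousLinearMap.inl ℝ E F) := by
      have hc : HasFDerivAt F₁ (fderiv ℝ F₁ p) p :=
        ((hf₁.differentiable two_ne_zero) p).hasFDerivAt
      exact (hc.comp (f := fun e : E => (e, p.2)) p.1 (hasFDerivAt_prodMk_left p.1 p.2)).fderiv
    have h2 : fderiv ℝ (fun y' => f₂ p.1 y') p.2 =
        (fderiv ℝ F₂ p).comp (ContinuousLinearMap.inr ℝ E F) := by
      have hc : HasFDerivAt F₂ (fderiv ℝ F₂ p) p :=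
        ((hf₂.differentiable two_ne_zero) p).hasFDerivAt
      exact (hc.comp (f := fun f : F => (p.1, f)) p.2 (hasFDerivAt_prodMk_right p.1 p.2)).fderiv
    simp only [gradient, h1, h2]
    rfl
  have hcd : ContDiff ℝ 1 ω := by
    rw [key]
    have d1 : ContDiff ℝ 1 (fderiv ℝ F₁) := hf₁.fderiv_right (le_refl _)
    have d2 : ContDiff ℝ 1 (fderiv ℝ F₂) := hf₂.fderiv_right (le_refl _)
    have c1 : ContDiff ℝ 1 (fun p =>
        (InnerProductSpace.toDual ℝ E).symm ((fderiv ℝ F₁ p).comp (ContinuousLinearMap.inl ℝ E F))) :=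
      (InnerProductSpace.toDual ℝ E).symm.contDiff.comp
        ((((ContinuousLinearMap.compL ℝ E (E × F) ℝ).flip (ContinuousLinearMap.inl ℝ E F)).contDiff).comp d1)
    have c2 : ContDiff ℝ 1 (fun p =>
        (InnerProductSpace.toDual ℝ F).symm ((fderiv ℝ F₂ p).comp (ContinuousLinearMap.inr ℝ E F))) :=
      (InnerProductSpace.toDual ℝ F).symm.contDiff.comp
        ((((ContinuousLinearMap.compL ℝ F (E × F) ℝ).flip (ContinuousLinearMap.inr ℝ E F)).contDiff).comp d2)
    exact ContDiff.prodMk c1 c2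
  have hL : HasStrictFDerivAt ω (fderiv ℝ ω (x, y)) (x, y) :=
    hcd.contDiffAt.hasStrictFDerivAt one_ne_zero
  let e : (E × F) ≃L[ℝ] (E × F) :=
    (LinearEquiv.ofBijective ((fderiv ℝ ω (x, y)) : (E × F) →ₗ[ℝ] (E × F)) hinv).toContinuousLinearEquiv
  have he : (e : (E × F) →L[ℝ] (E × F)) = fderiv ℝ ω (x, y) :=
    ContinuousLinearMap.ext fun v => rfl
  have hL' : HasStrictFDerivAt ω (e : (E × F) →L[ℝ] (E × F)) (x, y) := by
    rw [he]; exact hL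
  refine ⟨(hL'.toOpenPartialHomeomorph ω).source,
    (hL'.toOpenPartialHomeomorph ω).open_source.mem_nhds hL'.mem_toOpenPartialHomeomorph_source,
    fun q hq hq0 => ?_⟩
  have hinj := (hL'.toOpenPartialHomeomorph ω).injOn
  have heq : (hL'.toOpenPartialHomeomorph ω) q = (hL'.toOpenPartialHomeomorph ω) (x, y) := by
    rw [hL'.toOpenPartialHomeomorph_coe, hq0, hzero]
  exact hinj hq hL'.mem_toOpenPartialHomeomorph_source heq
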